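/- Let f = (f11, f12, f22) ∈ C²_c(S²; D1). If Lf(x) = 0, Tf(x) = 0, and Mf(x) = 0 for all x ∈ ℝ², then f11 ≡ f12 ≡ f22 ≡ 0. (A symmetric 2-tensor field is uniquely determined by its longitudinal, transverse, and mixed V-line transforms.) -/

import Mathlib

noncomputable section

open MeasureTheory

/-- The divergent beam transform `X_w h (x) = ∫₀^∞ h(x + t w) dt`. -/
def Xbeam (w : ℝ × ℝ) (h : ℝ × ℝ → ℝ) (x : ℝ × ℝ) : ℝ :=
  ∫ t in Set.Ioi (0 : ℝ), h (x + t • w)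

/-- The k-th moment divergent beam transform `X_w^k h (x) = ∫₀^∞ t^k h(x + t w) dt`. -/
def Xmom (k : ℕ) (w : ℝ × ℝ) (h : ℝ × ℝ → ℝ) (x : ℝ × ℝ) : ℝ :=
  ∫ t in Set.Ioi (0 : ℝ), t ^ k * h (x + t • w)

/-- The directional derivative `D_w h = w ⋅ ∇h`. -/
def Dir (w : ℝ × ℝ) (h : ℝ × ℝ → ℝ) (x : ℝ × ℝ) : ℝ :=
  fderiv ℝ h x w

/-- Support contained in the open unit disc `D1`. -/
def SuppInDisc (h : ℝ × ℝ → ℝ) : Prop :=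
  ∀ x : ℝ × ℝ, 1 ≤ x.1 ^ 2 + x.2 ^ 2 → h x = 0

/-- The longitudinal V-line transform. -/
def VlineL (u1 u2 : ℝ) (f11 f12 f22 : ℝ × ℝ → ℝ) : ℝ × ℝ → ℝ :=
  Xbeam (u1, u2) (fun y => u1 ^ 2 * f11 y + 2 * u1 * u2 * f12 y + u2 ^ 2 * f22 y)
    + Xbeam (-u1, u2) (fun y => u1 ^ 2 * f11 y - 2 * u1 * u2 * f12 y + u2 ^ 2 * f22 y)

/-- The transverse V-line transform. -/
def VlineT (u1 u2 : ℝ) (f11 f12 f22 : ℝ × ℝ → ℝ) : ℝ × ℝ → ℝ :=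
  Xbeam (u1, u2) (fun y => u2 ^ 2 * f11 y - 2 * u1 * u2 * f12 y + u1 ^ 2 * f22 y)
    + Xbeam (-u1, u2) (fun y => u2 ^ 2 * f11 y + 2 * u1 * u2 * f12 y + u1 ^ 2 * f22 y)

/-- The mixed V-line transform. -/
def VlineM (u1 u2 : ℝ) (f11 f12 f22 : ℝ × ℝ → ℝ) : ℝ × ℝ → ℝ :=
  Xbeam (u1, u2) (fun y => -(u1 * u2) * f11 y + (u1 ^ 2 - u2 ^ 2) * f12 y + u1 * u2 * f22 y)
    + Xbeam (-u1, u2) (fun y => u1 * u2 * f11 y + (u1 ^ 2 - u2 ^ 2) * f12 y - u1 * u2 * f22 y)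

/-- The k-th moment longitudinal V-line transform. -/
def VlineLk (k : ℕ) (u1 u2 : ℝ) (f11 f12 f22 : ℝ × ℝ → ℝ) : ℝ × ℝ → ℝ :=
  Xmom k (u1, u2) (fun y => u1 ^ 2 * f11 y + 2 * u1 * u2 * f12 y + u2 ^ 2 * f22 y)
    + Xmom k (-u1, u2) (fun y => u1 ^ 2 * f11 y - 2 * u1 * u2 * f12 y + u2 ^ 2 * f22 y)

/-- The k-th moment transverse V-line transform. -/
def VlineTk (k : ℕ) (u1 u2 : ℝ) (f11 f12 f22 : ℝ × ℝ → ℝ) : ℝ × ℝ → ℝ :=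
  Xmom k (u1, u2) (fun y => u2 ^ 2 * f11 y - 2 * u1 * u2 * f12 y + u1 ^ 2 * f22 y)
    + Xmom k (-u1, u2) (fun y => u2 ^ 2 * f11 y + 2 * u1 * u2 * f12 y + u1 ^ 2 * f22 y)

/-- The k-th moment mixed V-line transform. -/
def VlineMk (k : ℕ) (u1 u2 : ℝ) (f11 f12 f22 : ℝ × ℝ → ℝ) : ℝ × ℝ → ℝ :=
  Xmom k (u1, u2) (fun y => -(u1 * u2) * f11 y + (u1 ^ 2 - u2 ^ 2) * f12 y + u1 * u2 * f22 y)
    + Xmom k (-u1, u2) (fun y => u1 * u2 * f11 y + (u1 ^ 2 - u2 ^ 2) * f12 y - u1 * u2 * f22 y)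

lemma smul_fst (t : ℝ) (w : ℝ × ℝ) (x : ℝ × ℝ) : (x + t • w).1 = x.1 + t * w.1 := rfl

lemma smul_snd (t : ℝ) (w : ℝ × ℝ) (x : ℝ × ℝ) : (x + t • w).2 = x.2 + t * w.2 := rfl

lemma far_out {w : ℝ × ℝ} (hw : w.1 ^ 2 + w.2 ^ 2 = 1) (x : ℝ × ℝ) {t : ℝ}
    (ht : 2 * (|x.1| + |x.2|) + 1 ≤ t) :
    1 ≤ (x + t • w).1 ^ 2 + (x + t • w).2 ^ 2 := by
  rw [smul_fst, smul_snd]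
  have h1 : x.1 * w.1 ≥ -(|x.1|) := by
    have : |x.1 * w.1| ≤ |x.1| := by
      rw [abs_mul]
      nlinarith [abs_nonneg x.1, abs_nonneg w.1, sq_abs w.1, sq_abs w.2, sq_nonneg w.2,
        sq_nonneg (|w.1| - 1), abs_nonneg x.2]
    linarith [neg_abs_le (x.1 * w.1), abs_le.mp this |>.1]
  have h2 : x.2 * w.2 ≥ -(|x.2|) := by
    have : |x.2 * w.2| ≤ |x.2| := by
      rw [abs_mul]
      nlinarith [abs_nonneg x.2, abs_nonneg w.2, sq_abs w.1, sq_abs w.2, sq_nonneg w.1,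
        sq_nonneg (|w.2| - 1)]
    linarith [abs_le.mp this |>.1]
  have ht1 : 1 ≤ t := by linarith [abs_nonneg x.1, abs_nonneg x.2]
  have ht0 : 0 ≤ t := le_trans zero_le_one ht1
  have hw2 : t^2*w.1^2 + t^2*w.2^2 = t^2 := by linear_combination t^2*hw
  have e1 : 2*t*(-(|x.1|)) ≤ 2*t*(x.1*w.1) := mul_le_mul_of_nonneg_left h1 (by linarith)
  have e2 : 2*t*(-(|x.2|)) ≤ 2*t*(x.2*w.2) := mul_le_mul_of_nonneg_left h2 (by linarith)
  have key : t*1 ≤ t*(t - 2*(|x.1|+|x.2|)) := mul_le_mul_of_nonneg_left (by linarith) ht0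
  nlinarith [hw2, e1, e2, key, sq_nonneg x.1, sq_nonneg x.2]

lemma bound_global {F : Type*} [NormedAddCommGroup F] {H : ℝ × ℝ → F} (hc : Continuous H)
    (hs : ∀ y : ℝ × ℝ, 1 ≤ y.1 ^ 2 + y.2 ^ 2 → H y = 0) :
    ∃ C : ℝ, 0 ≤ C ∧ ∀ y, ‖H y‖ ≤ C := by
  obtain ⟨C, hC⟩ := (isCompact_closedBall (0 : ℝ × ℝ) 1).exists_bound_of_continuousOn
    hc.continuousOn
  refine ⟨max C 0, le_max_right _ _, fun y => ?_⟩
  by_cases hy : y ∈ Metric.closedBall (0 : ℝ × ℝ) 1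
  · exact le_trans (hC y hy) (le_max_left _ _)
  · have : 1 ≤ y.1 ^ 2 + y.2 ^ 2 := by
      simp only [Metric.mem_closedBall, dist_zero_right, not_le] at hy
      have := hy
      rw [Prod.norm_def] at this
      rcases max_cases ‖y.1‖ ‖y.2‖ with ⟨h, _⟩ | ⟨h, _⟩ <;> rw [h] at this <;>
        [skip; skip] <;> nlinarith [sq_nonneg y.1, sq_nonneg y.2, Real.norm_eq_abs y.1 ▸ sq_abs y.1,
          Real.norm_eq_abs y.2 ▸ sq_abs y.2, norm_nonneg y.1, norm_nonneg y.2]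
    rw [hs y this]
    simp [le_max_right]

lemma fderiv_zero_far {h : ℝ × ℝ → ℝ} (hc : ContDiff ℝ 2 h) (hs : SuppInDisc h) :
    ∀ y : ℝ × ℝ, 1 ≤ y.1 ^ 2 + y.2 ^ 2 → fderiv ℝ h y = 0 := by
  have hopen : ∀ y : ℝ × ℝ, 1 < y.1 ^ 2 + y.2 ^ 2 → fderiv ℝ h y = 0 := by
    intro y hy
    have hev : h =ᶠ[nhds y] fun _ => (0 : ℝ) := by
      have hop : IsOpen {z : ℝ × ℝ | 1 < z.1 ^ 2 + z.2 ^ 2} := by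
        apply isOpen_lt continuous_const
        fun_prop
      filter_upwards [hop.mem_nhds hy] with z hz
      exact hs z (le_of_lt hz)
    rw [hev.fderiv_eq]
    exact fderiv_const_apply 0
  intro y hy
  rcases lt_or_eq_of_le hy with h1 | h1
  · exact hopen y h1
  · have hcont : Continuous fun t : ℝ => fderiv ℝ h (t • y) :=
      (hc.continuous_fderiv (by norm_num)).comp (continuous_id.smul continuous_const)
    have h2 : Filter.Tendsto (fun t : ℝ => fderiv ℝ h (t • y)) (nhdsWithin 1 (Set.Ioi 1))
        (nhds (fderiv ℝ h y)) := by
      have := hcont.tendsto 1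
      simp only [one_smul] at this
      exact this.mono_left nhdsWithin_le_nhds
    have h3 : Filter.Tendsto (fun t : ℝ => fderiv ℝ h (t • y)) (nhdsWithin 1 (Set.Ioi 1))
        (nhds 0) := by
      apply Filter.Tendsto.congr' _ tendsto_const_nhds
      filter_upwards [self_mem_nhdsWithin] with t ht
      refine (hopen (t • y) ?_).symm
      have : (t • y).1 = t * y.1 ∧ (t • y).2 = t * y.2 := ⟨rfl, rfl⟩
      rw [this.1, this.2]
      have ht1 : 1 < t := ht
      have e : (t * y.1) ^ 2 + (t * y.2) ^ 2 = t ^ 2 := by linear_combination (-(t ^ 2)) * h1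
      rw [e]
      nlinarith
    exact tendsto_nhds_unique h2 h3

lemma xbeam_eq {h : ℝ × ℝ → ℝ} {w : ℝ × ℝ} (hc : Continuous h) (hs : SuppInDisc h)
    (hw : w.1 ^ 2 + w.2 ^ 2 = 1) (x : ℝ × ℝ) {T : ℝ} (hT : 2 * (|x.1| + |x.2|) + 1 ≤ T) :
    Xbeam w h x = ∫ t in (0:ℝ)..T, h (x + t • w) := by
  have hfc : Continuous fun t : ℝ => h (x + t • w) := by fun_prop
  have hT0 : 0 ≤ T := by linarith [abs_nonneg x.1, abs_nonneg x.2]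
  have hzero : Set.EqOn (fun t : ℝ => h (x + t • w)) (fun _ => (0:ℝ)) (Set.Ioi T) := by
    intro t ht
    exact hs _ (far_out hw x (le_trans hT (le_of_lt ht)))
  have hi1 : IntegrableOn (fun t : ℝ => h (x + t • w)) (Set.Ioc 0 T) := hfc.integrableOn_Ioc
  have hi2 : IntegrableOn (fun t : ℝ => h (x + t • w)) (Set.Ioi T) := by
    rw [integrableOn_congr_fun hzero measurableSet_Ioi]
    exact integrableOn_zero
  have hsplit : Set.Ioc 0 T ∪ Set.Ioi T = Set.Ioi 0 := Set.Ioc_union_Ioi_eq_Ioi hT0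
  rw [Xbeam, ← hsplit, setIntegral_union (Set.Ioc_disjoint_Ioi le_rfl) measurableSet_Ioi hi1 hi2,
    setIntegral_congr_fun measurableSet_Ioi hzero, integral_zero, add_zero,
    intervalIntegral.integral_of_le hT0]

lemma shift_integral {h : ℝ × ℝ → ℝ} {w : ℝ × ℝ} (hc : Continuous h) (hs : SuppInDisc h)
    (hw : w.1 ^ 2 + w.2 ^ 2 = 1) (x : ℝ × ℝ) {s T : ℝ} (hsb : |s| ≤ 2)
    (hT : 2 * (|x.1| + |x.2|) + 3 ≤ T) :
    (∫ t in (0:ℝ)..T, h (x + s • w + t • w)) =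
      (∫ t in (0:ℝ)..T, h (x + t • w)) - ∫ t in (0:ℝ)..s, h (x + t • w) := by
  have hfc : Continuous fun t : ℝ => h (x + t • w) := by fun_prop
  have hii : ∀ a b : ℝ, IntervalIntegrable (fun t : ℝ => h (x + t • w)) volume a b :=
    fun a b => hfc.intervalIntegrable a b
  have key : ∀ t : ℝ, x + s • w + t • w = x + (t + s) • w := by
    intro t; rw [add_smul]; abel
  have e1 : (∫ t in (0:ℝ)..T, h (x + s • w + t • w))
      = ∫ t in s..(T+s), h (x + t • w) := by
    simp_rw [key]
    have := intervalIntegral.integral_comp_add_right (a := (0:ℝ)) (b := T)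
      (fun t => h (x + t • w)) s
    simpa using this
  have e2 : (∫ t in s..(T+s), h (x + t • w)) = (∫ t in s..(0:ℝ), h (x + t • w))
      + ∫ t in (0:ℝ)..(T+s), h (x + t • w) :=
    (intervalIntegral.integral_add_adjacent_intervals (hii s 0) (hii 0 (T+s))).symm
  have e3 : (∫ t in (0:ℝ)..(T+s), h (x + t • w)) = (∫ t in (0:ℝ)..T, h (x + t • w))
      + ∫ t in T..(T+s), h (x + t • w) :=
    (intervalIntegral.integral_add_adjacent_intervals (hii 0 T) (hii T (T+s))).symm
  have e4 : (∫ t in T..(T+s), h (x + t • w)) = 0 := by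
    have hz : Set.EqOn (fun t : ℝ => h (x + t • w)) (fun _ => (0:ℝ)) (Set.uIcc T (T+s)) := by
      intro t ht
      have h1 : min T (T+s) ≤ t := (Set.mem_uIcc.mp ht).elim (fun h => (min_le_left _ _).trans h.1)
        (fun h => (min_le_right _ _).trans h.1)
      have habs := abs_le.mp hsb
      have : 2 * (|x.1| + |x.2|) + 1 ≤ t := by
        rcases le_or_gt T (T+s) with hc' | hc'
        · rw [min_eq_left hc'] at h1; linarith
        · rw [min_eq_right (le_of_lt hc')] at h1; linarith
      exact hs _ (far_out hw x this)
    rw [intervalIntegral.integral_congr hz, intervalIntegral.integral_zero]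
  rw [e1, e2, e3, e4, intervalIntegral.integral_symm]
  ring

lemma abs_coord_le {w : ℝ × ℝ} (hw : w.1 ^ 2 + w.2 ^ 2 = 1) :
    |w.1| ≤ 1 ∧ |w.2| ≤ 1 := by
  constructor
  · nlinarith [sq_abs w.1, sq_nonneg w.2, abs_nonneg w.1, sq_nonneg (|w.1| - 1)]
  · nlinarith [sq_abs w.2, sq_nonneg w.1, abs_nonneg w.2, sq_nonneg (|w.2| - 1)]

lemma coord_bound {w : ℝ × ℝ} (hw : w.1 ^ 2 + w.2 ^ 2 = 1) (x : ℝ × ℝ) {s : ℝ} (hs : |s| ≤ 2) :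
    |(x + s • w).1| ≤ |x.1| + 2 ∧ |(x + s • w).2| ≤ |x.2| + 2 := by
  obtain ⟨h1, h2⟩ := abs_coord_le hw
  constructor
  · rw [smul_fst]
    calc |x.1 + s * w.1| ≤ |x.1| + |s * w.1| := abs_add_le _ _
    _ ≤ |x.1| + 2 := by
        rw [abs_mul]
        nlinarith [abs_nonneg s, abs_nonneg w.1]
  · rw [smul_snd]
    calc |x.2 + s * w.2| ≤ |x.2| + |s * w.2| := abs_add_le _ _
    _ ≤ |x.2| + 2 := by
        rw [abs_mul]
        nlinarith [abs_nonneg s, abs_nonneg w.2]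

lemma dir_cont {Q : ℝ × ℝ → ℝ} (hQ : ContDiff ℝ 2 Q) (w : ℝ × ℝ) : Continuous (Dir w Q) :=
  (hQ.continuous_fderiv (by norm_num)).clm_apply continuous_const

lemma dir_supp {Q : ℝ × ℝ → ℝ} (hQ : ContDiff ℝ 2 Q) (sQ : SuppInDisc Q) (w : ℝ × ℝ) :
    SuppInDisc (Dir w Q) := by
  intro y hy
  rw [Dir, fderiv_zero_far hQ sQ y hy]
  rfl

lemma hasDerivAt_comp_line {Q : ℝ × ℝ → ℝ} (hQ : ContDiff ℝ 2 Q) (c w : ℝ × ℝ) (s : ℝ) :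
    HasDerivAt (fun s : ℝ => Q (c + s • w)) (Dir w Q (c + s • w)) s := by
  have hcurve : HasDerivAt (fun s : ℝ => c + s • w) w s := by
    have h := ((hasDerivAt_id s).smul_const w).const_add c
    simpa using h
  have := HasFDerivAt.comp_hasDerivAt (f := fun s : ℝ => c + s • w) (x := s)
    (((hQ.differentiable (by norm_num)) (c + s • w)).hasFDerivAt) hcurve
  exact this

lemma pde_of_vanish {u1 u2 : ℝ} (hu : u1 ^ 2 + u2 ^ 2 = 1)
    {P Q : ℝ × ℝ → ℝ} (hP : ContDiff ℝ 2 P) (hQ : ContDiff ℝ 2 Q)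
    (sP : SuppInDisc P) (sQ : SuppInDisc Q)
    (hvan : ∀ x : ℝ × ℝ, Xbeam (u1, u2) P x + Xbeam (-u1, u2) Q x = 0) :
    ∀ x : ℝ × ℝ, Dir (-u1, u2) P x + Dir (u1, u2) Q x = 0 := by
  set u : ℝ × ℝ := (u1, u2) with hu_def
  set v : ℝ × ℝ := (-u1, u2) with hv_def
  have hu' : u.1 ^ 2 + u.2 ^ 2 = 1 := hu
  have hv' : v.1 ^ 2 + v.2 ^ 2 = 1 := by
    show (-u1) ^ 2 + u2 ^ 2 = 1
    rw [neg_sq]; exact hu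
  have hPc := hP.continuous
  have hQc := hQ.continuous
  obtain ⟨C, hC0, hC⟩ := bound_global (dir_cont hQ u) (dir_supp hQ sQ u)
  have keyA : ∀ x : ℝ × ℝ, ∀ T : ℝ, 2 * (|x.1| + |x.2|) + 9 ≤ T →
      P x = ∫ t in (0:ℝ)..T, Dir u Q (x + t • v) := by
    intro x T hT
    set G : ℝ → ℝ := fun s =>
      ((∫ t in (0:ℝ)..T, P (x + t • u)) - ∫ t in (0:ℝ)..s, P (x + t • u))
        + ∫ t in (0:ℝ)..T, Q (x + s • u + t • v) with hG_def
    have hGzero : ∀ s : ℝ, |s| ≤ 1 → G s = 0 := by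
      intro s hs1
      have hs2 : |s| ≤ 2 := le_trans hs1 one_le_two
      have hcb := coord_bound hu' x hs2
      have e1 : Xbeam u P (x + s • u) = ∫ t in (0:ℝ)..T, P (x + s • u + t • u) :=
        xbeam_eq hPc sP hu' _ (by
          have := hcb.1; have := hcb.2; linarith)
      have e2 : (∫ t in (0:ℝ)..T, P (x + s • u + t • u))
          = (∫ t in (0:ℝ)..T, P (x + t • u)) - ∫ t in (0:ℝ)..s, P (x + t • u) :=
        shift_integral hPc sP hu' x hs2 (by linarith)
      have e3 : Xbeam v Q (x + s • u) = ∫ t in (0:ℝ)..T, Q (x + s • u + t • v) :=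
        xbeam_eq hQc sQ hv' _ (by
          have := hcb.1; have := hcb.2; linarith)
      have : G s = Xbeam u P (x + s • u) + Xbeam v Q (x + s • u) := by
        rw [e1, e2, e3]
      rw [this, hvan (x + s • u)]
    have hd2 : HasDerivAt (fun s : ℝ => ∫ t in (0:ℝ)..s, P (x + t • u)) (P x) 0 := by
      have hfc : Continuous fun t : ℝ => P (x + t • u) := by fun_prop
      have h := intervalIntegral.integral_hasDerivAt_right (hfc.intervalIntegrable 0 0)
        (hfc.stronglyMeasurableAtFilter _ _) hfc.continuousAt
      simpa using h
    have hd3 : HasDerivAt (fun s : ℝ => ∫ t in (0:ℝ)..T, Q (x + s • u + t • v))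
        (∫ t in (0:ℝ)..T, Dir u Q (x + t • v)) 0 := by
      have key : ∀ s t : ℝ, x + s • u + t • v = (x + t • v) + s • u := by
        intro s t; abel
      have hmain := intervalIntegral.hasDerivAt_integral_of_dominated_loc_of_deriv_le
        (F := fun (s : ℝ) (t : ℝ) => Q (x + s • u + t • v))
        (F' := fun (s : ℝ) (t : ℝ) => Dir u Q (x + s • u + t • v))
        (a := 0) (b := T) (x₀ := 0) (μ := volume) (bound := fun _ => C) Filter.univ_mem
        (Filter.Eventually.of_forall fun s =>
          (Continuous.aestronglyMeasurable (by fun_prop)))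
        ((Continuous.intervalIntegrable (by fun_prop)) 0 T)
        (Continuous.aestronglyMeasurable (by
          have : Continuous fun t : ℝ => Dir u Q (x + (0:ℝ) • u + t • v) :=
            (dir_cont hQ u).comp (by fun_prop)
          exact this))
        (ae_of_all _ fun t ht s hs => hC _)
        (intervalIntegrable_const)
        (ae_of_all _ fun t ht s hs => by
          have h0 := hasDerivAt_comp_line hQ (x + t • v) u s
          have hfun : (fun s : ℝ => Q ((x + t • v) + s • u)) = fun s : ℝ => Q (x + s • u + t • v) := by
            funext s'; rw [key]
          rw [hfun, ← key] at h0
          simpa using h0)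
      have h2 := hmain.2
      have : (∫ t in (0:ℝ)..T, Dir u Q (x + (0:ℝ) • u + t • v))
          = ∫ t in (0:ℝ)..T, Dir u Q (x + t • v) := by
        congr 1 with t
        rw [zero_smul, add_zero]
      rw [this] at h2
      exact h2
    have hdG : HasDerivAt G (-(P x) + ∫ t in (0:ℝ)..T, Dir u Q (x + t • v)) 0 := by
      have h := ((hasDerivAt_const (0:ℝ) (∫ t in (0:ℝ)..T, P (x + t • u))).sub hd2).add hd3
      simp only [zero_sub] at h
      exact h
    have hzeroDeriv : HasDerivAt G 0 0 := by
      have hev : G =ᶠ[nhds (0:ℝ)] fun _ => (0:ℝ) := by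
        filter_upwards [Metric.ball_mem_nhds (0:ℝ) one_pos] with s hs
        exact hGzero s (le_of_lt (by simpa [Real.dist_eq] using hs))
      exact (hev.hasDerivAt_iff).mpr (hasDerivAt_const 0 (0:ℝ))
    have hfin := hdG.unique hzeroDeriv
    linarith [hfin]
  intro x0
  set T : ℝ := 2 * (|x0.1| + |x0.2|) + 20 with hT_def
  set q : ℝ × ℝ → ℝ := Dir u Q with hq_def
  have hqc : Continuous q := dir_cont hQ u
  have hqs : SuppInDisc q := dir_supp hQ sQ u
  have hBr : ∀ r : ℝ, |r| ≤ 1 → P (x0 + r • v)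
      = (∫ t in (0:ℝ)..T, q (x0 + t • v)) - ∫ t in (0:ℝ)..r, q (x0 + t • v) := by
    intro r hr
    have hr2 : |r| ≤ 2 := le_trans hr one_le_two
    have hcb := coord_bound hv' x0 hr2
    rw [keyA (x0 + r • v) T (by
      have := hcb.1; have := hcb.2; linarith)]
    exact shift_integral hqc hqs hv' x0 hr2 (by linarith)
  have hL : HasDerivAt (fun r : ℝ => P (x0 + r • v)) (Dir v P x0) 0 := by
    have := hasDerivAt_comp_line hP x0 v 0
    simpa using this
  have hR : HasDerivAt (fun r : ℝ => (∫ t in (0:ℝ)..T, q (x0 + t • v))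
      - ∫ t in (0:ℝ)..r, q (x0 + t • v)) (-(q x0)) 0 := by
    have hfc : Continuous fun t : ℝ => q (x0 + t • v) := by fun_prop
    have h2 := intervalIntegral.integral_hasDerivAt_right (hfc.intervalIntegrable 0 0)
      (hfc.stronglyMeasurableAtFilter _ _) hfc.continuousAt
    have h := (hasDerivAt_const (0:ℝ) (∫ t in (0:ℝ)..T, q (x0 + t • v))).sub h2
    simp only [zero_sub, zero_smul, add_zero] at h
    exact h
  have hL' : HasDerivAt (fun r : ℝ => P (x0 + r • v)) (-(q x0)) 0 := by
    refine hR.congr_of_eventuallyEq ?_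
    filter_upwards [Metric.ball_mem_nhds (0:ℝ) one_pos] with r hr
    exact hBr r (le_of_lt (by simpa [Real.dist_eq] using hr))
  have hfin := hL.unique hL'
  rw [hfin, hq_def]
  ring

lemma dir_shapeA (c1 c2 c3 : ℝ) {f g h : ℝ × ℝ → ℝ} (hf : ContDiff ℝ 2 f)
    (hg : ContDiff ℝ 2 g) (hh : ContDiff ℝ 2 h) (w x : ℝ × ℝ) :
    Dir w (fun y => c1 * f y + c2 * g y + c3 * h y) x
      = c1 * Dir w f x + c2 * Dir w g x + c3 * Dir w h x := by
  have H : HasFDerivAt (fun y => c1 * f y + c2 * g y + c3 * h y)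
      (c1 • fderiv ℝ f x + c2 • fderiv ℝ g x + c3 • fderiv ℝ h x) x :=
    ((((hf.differentiable (by norm_num)) x).hasFDerivAt.const_mul c1).add
      (((hg.differentiable (by norm_num)) x).hasFDerivAt.const_mul c2)).add
      (((hh.differentiable (by norm_num)) x).hasFDerivAt.const_mul c3)
  rw [Dir, H.fderiv]
  simp [Dir, smul_eq_mul]

lemma dir_shapeB (c1 c2 c3 : ℝ) {f g h : ℝ × ℝ → ℝ} (hf : ContDiff ℝ 2 f)
    (hg : ContDiff ℝ 2 g) (hh : ContDiff ℝ 2 h) (w x : ℝ × ℝ) :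
    Dir w (fun y => c1 * f y - c2 * g y + c3 * h y) x
      = c1 * Dir w f x - c2 * Dir w g x + c3 * Dir w h x := by
  have H : HasFDerivAt (fun y => c1 * f y - c2 * g y + c3 * h y)
      (c1 • fderiv ℝ f x - c2 • fderiv ℝ g x + c3 • fderiv ℝ h x) x :=
    ((((hf.differentiable (by norm_num)) x).hasFDerivAt.const_mul c1).sub
      (((hg.differentiable (by norm_num)) x).hasFDerivAt.const_mul c2)).add
      (((hh.differentiable (by norm_num)) x).hasFDerivAt.const_mul c3)
  rw [Dir, H.fderiv]
  simp [Dir, smul_eq_mul]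

lemma dir_shapeC (c1 c2 c3 : ℝ) {f g h : ℝ × ℝ → ℝ} (hf : ContDiff ℝ 2 f)
    (hg : ContDiff ℝ 2 g) (hh : ContDiff ℝ 2 h) (w x : ℝ × ℝ) :
    Dir w (fun y => c1 * f y + c2 * g y - c3 * h y) x
      = c1 * Dir w f x + c2 * Dir w g x - c3 * Dir w h x := by
  have H : HasFDerivAt (fun y => c1 * f y + c2 * g y - c3 * h y)
      (c1 • fderiv ℝ f x + c2 • fderiv ℝ g x - c3 • fderiv ℝ h x) x :=
    ((((hf.differentiable (by norm_num)) x).hasFDerivAt.const_mul c1).add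
      (((hg.differentiable (by norm_num)) x).hasFDerivAt.const_mul c2)).sub
      (((hh.differentiable (by norm_num)) x).hasFDerivAt.const_mul c3)
  rw [Dir, H.fderiv]
  simp [Dir, smul_eq_mul]

lemma dir_expand (w1 w2 : ℝ) (h : ℝ × ℝ → ℝ) (x : ℝ × ℝ) :
    Dir (w1, w2) h x = w1 * Dir (1, 0) h x + w2 * Dir (0, 1) h x := by
  rw [Dir, Dir, Dir]
  have hw : ((w1, w2) : ℝ × ℝ) = w1 • ((1:ℝ), (0:ℝ)) + w2 • ((0:ℝ), (1:ℝ)) := by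
    ext <;> simp
  conv_lhs => rw [hw]
  rw [map_add, _root_.map_smul, _root_.map_smul]
  simp [smul_eq_mul]

lemma zero_of_dir_e {h : ℝ × ℝ → ℝ} (hd : ContDiff ℝ 2 h) (hs : SuppInDisc h)
    (w : ℝ × ℝ) (hw : w.1 ^ 2 + w.2 ^ 2 = 1)
    (hz : ∀ x : ℝ × ℝ, Dir w h x = 0) : ∀ x : ℝ × ℝ, h x = 0 := by
  intro x
  have hk : ∀ t : ℝ, HasDerivAt (fun t : ℝ => h (x + t • w)) 0 t := by
    intro t
    have := hasDerivAt_comp_line hd x w t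
    rwa [hz] at this
  have hconst : h (x + (0:ℝ) • w) = h (x + (2 * (|x.1| + |x.2|) + 1) • w) :=
    is_const_of_deriv_eq_zero (fun t => (hk t).differentiableAt)
      (fun t => (hk t).deriv) 0 (2 * (|x.1| + |x.2|) + 1)
  have hfar : h (x + (2 * (|x.1| + |x.2|) + 1) • w) = 0 :=
    hs _ (far_out hw x le_rfl)
  simpa [hfar] using hconst

lemma cr_zero {a b : ℝ} (ha : 0 < a) (hb : b ≠ 0) {g p : ℝ × ℝ → ℝ}
    (hgd : ContDiff ℝ 2 g) (hpd : ContDiff ℝ 2 p) (sg : SuppInDisc g) (sp : SuppInDisc p)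
    (e4 : ∀ x : ℝ × ℝ, a * Dir (1, 0) p x = b * Dir (0, 1) g x)
    (e5 : ∀ x : ℝ × ℝ, a * Dir (1, 0) g x = -(b * Dir (0, 1) p x)) :
    ∀ x : ℝ × ℝ, g x = 0 ∧ p x = 0 := by
  set φ : ℂ →L[ℝ] ℝ × ℝ := (a • Complex.reCLM).prod ((-b) • Complex.imCLM) with hφ_def
  have hφ : ∀ z : ℂ, φ z = (a * z.re, -b * z.im) := by
    intro z
    simp [hφ_def, ContinuousLinearMap.prod_apply, smul_eq_mul]
  set F : ℂ → ℂ := fun z => (g (φ z) : ℂ) + (p (φ z) : ℂ) * Complex.I with hF_def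
  have hvec : ∀ c d : ℝ, ((c, d) : ℝ × ℝ) = c • ((1:ℝ), (0:ℝ)) + d • ((0:ℝ), (1:ℝ)) := by
    intro c d; ext <;> simp
  have hF : ∀ z : ℂ, HasDerivAt F
      ((a * Dir (1, 0) g (φ z) : ℝ) + (a * Dir (1, 0) p (φ z) : ℝ) * Complex.I) z := by
    intro z
    set Dg := fderiv ℝ g (φ z) with hDg
    set Dp := fderiv ℝ p (φ z) with hDp
    have hg1 : HasFDerivAt (fun w => g (φ w)) (Dg.comp φ) z :=
      ((hgd.differentiable (by norm_num)) (φ z)).hasFDerivAt.comp z φ.hasFDerivAt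
    have hp1 : HasFDerivAt (fun w => p (φ w)) (Dp.comp φ) z :=
      ((hpd.differentiable (by norm_num)) (φ z)).hasFDerivAt.comp z φ.hasFDerivAt
    have hg2 : HasFDerivAt (fun w => (g (φ w) : ℂ))
        (Complex.ofRealCLM.comp (Dg.comp φ)) z :=
      Complex.ofRealCLM.hasFDerivAt.comp z hg1
    have hp2 : HasFDerivAt (fun w => (p (φ w) : ℂ) * Complex.I)
        (Complex.I • (Complex.ofRealCLM.comp (Dp.comp φ))) z :=
      (Complex.ofRealCLM.hasFDerivAt.comp z hp1).mul_const Complex.I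
    have hsum := hg2.add hp2
    set c : ℂ := (a * Dir (1, 0) g (φ z) : ℝ) + (a * Dir (1, 0) p (φ z) : ℝ) * Complex.I with hc
    have hkey : (ContinuousLinearMap.smulRight (1 : ℂ →L[ℂ] ℂ) c).restrictScalars ℝ
        = Complex.ofRealCLM.comp (Dg.comp φ) + Complex.I • Complex.ofRealCLM.comp (Dp.comp φ) := by
      ext w
      have lhs_eval : ((ContinuousLinearMap.smulRight (1 : ℂ →L[ℂ] ℂ) c).restrictScalars ℝ) w
          = w * c := by
        simp
      have rhs_eval : (Complex.ofRealCLM.comp (Dg.comp φ)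
            + Complex.I • Complex.ofRealCLM.comp (Dp.comp φ)) w
          = ((Dg (φ w) : ℝ) : ℂ) + Complex.I * ((Dp (φ w) : ℝ) : ℂ) := by
        simp
      have hφw : φ w = (a * w.re) • ((1:ℝ), (0:ℝ)) + (-b * w.im) • ((0:ℝ), (1:ℝ)) := by
        rw [hφ w, hvec]
      have hDgw : Dg (φ w)
          = (a * w.re) * Dir (1, 0) g (φ z) + (-b * w.im) * Dir (0, 1) g (φ z) := by
        rw [hφw, map_add, _root_.map_smul, _root_.map_smul]
        simp [Dir, smul_eq_mul, hDg]
      have hDpw : Dp (φ w)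
          = (a * w.re) * Dir (1, 0) p (φ z) + (-b * w.im) * Dir (0, 1) p (φ z) := by
        rw [hφw, map_add, _root_.map_smul, _root_.map_smul]
        simp [Dir, smul_eq_mul, hDp]
      rw [lhs_eval, rhs_eval, hDgw, hDpw, hc]
      have h4 := e4 (φ z)
      have h5 := e5 (φ z)
      rw [Complex.ext_iff]
      constructor
      · simp only [Complex.add_re, Complex.add_im, Complex.mul_re, Complex.mul_im,
          Complex.ofReal_re, Complex.ofReal_im, Complex.I_re, Complex.I_im]
        ring_nf
        linear_combination (-(w.im)) * h4
      · simp only [Complex.add_re, Complex.add_im, Complex.mul_re, Complex.mul_im,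
          Complex.ofReal_re, Complex.ofReal_im, Complex.I_re, Complex.I_im]
        ring_nf
        linear_combination w.im * h5
    rw [hasDerivAt_iff_hasFDerivAt]
    exact hasFDerivAt_of_restrictScalars ℝ hsum hkey
  have hdiff : Differentiable ℂ F := fun z => (hF z).differentiableAt
  obtain ⟨Cg, hCg0, hCg⟩ := bound_global hgd.continuous sg
  obtain ⟨Cp, hCp0, hCp⟩ := bound_global hpd.continuous sp
  have hbd : Bornology.IsBounded (Set.range F) := by
    rw [isBounded_iff_forall_norm_le]
    refine ⟨Cg + Cp, ?_⟩
    rintro y ⟨z, rfl⟩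
    calc ‖F z‖ ≤ ‖(g (φ z) : ℂ)‖ + ‖(p (φ z) : ℂ) * Complex.I‖ := norm_add_le _ _
    _ ≤ Cg + Cp := by
        rw [norm_mul, Complex.norm_I, mul_one, Complex.norm_real, Complex.norm_real]
        exact add_le_add (hCg _) (hCp _)
  have hFzero : ∀ z : ℂ, F z = 0 := by
    have h20 : φ ((2/a : ℝ) : ℂ) = ((2 : ℝ), (0 : ℝ)) := by
      rw [hφ]
      simp
      field_simp
    have hF0 : F ((2/a : ℝ) : ℂ) = 0 := by
      rw [hF_def]
      simp only [h20]
      rw [sg ((2:ℝ), (0:ℝ)) (by norm_num), sp ((2:ℝ), (0:ℝ)) (by norm_num)]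
      simp
    intro z
    rw [hdiff.apply_eq_apply_of_bounded hbd z ((2/a : ℝ) : ℂ), hF0]
  intro x
  set z : ℂ := (x.1 / a : ℝ) + (-(x.2 / b) : ℝ) * Complex.I with hz
  have hφz : φ z = x := by
    rw [hφ]
    have : z.re = x.1 / a ∧ z.im = -(x.2 / b) := by
      constructor <;> simp [hz]
    rw [this.1, this.2]
    ext
    · show a * (x.1 / a) = x.1
      field_simp
    · show -b * -(x.2 / b) = x.2
      field_simp
  have h0 := hFzero z
  rw [hF_def] at h0
  simp only [hφz] at h0
  have hre := congrArg Complex.re h0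
  have him := congrArg Complex.im h0
  simp [Complex.add_re, Complex.mul_re, Complex.add_im, Complex.mul_im] at hre him
  exact ⟨hre, him⟩

lemma dir_add {f g : ℝ × ℝ → ℝ} (hf : ContDiff ℝ 2 f) (hg : ContDiff ℝ 2 g) (w x : ℝ × ℝ) :
    Dir w (fun y => f y + g y) x = Dir w f x + Dir w g x := by
  have H := ((hf.differentiable (by norm_num)) x).hasFDerivAt.add
    ((hg.differentiable (by norm_num)) x).hasFDerivAt
  rw [Dir, show (fun y => f y + g y) = f + g from rfl, H.fderiv]
  simp [Dir]

lemma dir_neg (f : ℝ × ℝ → ℝ) (w x : ℝ × ℝ) :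
    Dir w (fun y => -f y) x = -Dir w f x := by
  rw [Dir, fderiv_fun_neg]
  simp [Dir]

/-- a symmetric 2-tensor field is uniquely determined by its
longitudinal, transverse, and mixed V-line transforms. -/
theorem injectivity_L_T_M
    (u1 u2 : ℝ) (hu : u1 ^ 2 + u2 ^ 2 = 1) (hu1 : 0 < u1) (hu2 : 0 < u2)
    (f11 f12 f22 : ℝ × ℝ → ℝ)
    (h11 : ContDiff ℝ 2 f11) (h12 : ContDiff ℝ 2 f12) (h22 : ContDiff ℝ 2 f22)
    (s11 : SuppInDisc f11) (s12 : SuppInDisc f12) (s22 : SuppInDisc f22)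
    (hL : ∀ x : ℝ × ℝ, VlineL u1 u2 f11 f12 f22 x = 0)
    (hT : ∀ x : ℝ × ℝ, VlineT u1 u2 f11 f12 f22 x = 0)
    (hM : ∀ x : ℝ × ℝ, VlineM u1 u2 f11 f12 f22 x = 0) :
    ∀ x : ℝ × ℝ, f11 x = 0 ∧ f12 x = 0 ∧ f22 x = 0 := by
  have hsupp3 : ∀ (c1 c2 c3 : ℝ), SuppInDisc (fun y => c1 * f11 y + c2 * f12 y + c3 * f22 y) :=
    fun c1 c2 c3 y hy => by simp only [s11 y hy, s12 y hy, s22 y hy]; ring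
  have hsupp3' : ∀ (c1 c2 c3 : ℝ), SuppInDisc (fun y => c1 * f11 y - c2 * f12 y + c3 * f22 y) :=
    fun c1 c2 c3 y hy => by simp only [s11 y hy, s12 y hy, s22 y hy]; ring
  have hsupp3'' : ∀ (c1 c2 c3 : ℝ), SuppInDisc (fun y => c1 * f11 y + c2 * f12 y - c3 * f22 y) :=
    fun c1 c2 c3 y hy => by simp only [s11 y hy, s12 y hy, s22 y hy]; ring
  have hcdA : ∀ (c1 c2 c3 : ℝ), ContDiff ℝ 2 (fun y => c1 * f11 y + c2 * f12 y + c3 * f22 y) :=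
    fun c1 c2 c3 => ((contDiff_const.mul h11).add (contDiff_const.mul h12)).add
      (contDiff_const.mul h22)
  have hcdB : ∀ (c1 c2 c3 : ℝ), ContDiff ℝ 2 (fun y => c1 * f11 y - c2 * f12 y + c3 * f22 y) :=
    fun c1 c2 c3 => ((contDiff_const.mul h11).sub (contDiff_const.mul h12)).add
      (contDiff_const.mul h22)
  have hcdC : ∀ (c1 c2 c3 : ℝ), ContDiff ℝ 2 (fun y => c1 * f11 y + c2 * f12 y - c3 * f22 y) :=
    fun c1 c2 c3 => ((contDiff_const.mul h11).add (contDiff_const.mul h12)).sub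
      (contDiff_const.mul h22)
  have E1 := pde_of_vanish hu (hcdA (u1^2) (2*u1*u2) (u2^2)) (hcdB (u1^2) (2*u1*u2) (u2^2))
    (hsupp3 _ _ _) (hsupp3' _ _ _)
    (fun x => by have := hL x; simp only [VlineL, Pi.add_apply] at this; exact this)
  have E2 := pde_of_vanish hu (hcdB (u2^2) (2*u1*u2) (u1^2)) (hcdA (u2^2) (2*u1*u2) (u1^2))
    (hsupp3' _ _ _) (hsupp3 _ _ _)
    (fun x => by have := hT x; simp only [VlineT, Pi.add_apply] at this; exact this)
  have E3 := pde_of_vanish hu (hcdA (-(u1*u2)) (u1^2-u2^2) (u1*u2)) (hcdC (u1*u2) (u1^2-u2^2) (u1*u2))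
    (hsupp3 _ _ _) (hsupp3'' _ _ _)
    (fun x => by have := hM x; simp only [VlineM, Pi.add_apply] at this; exact this)
  have E1' : ∀ x : ℝ × ℝ, -4*u1^2*u2 * Dir (1,0) f12 x + 2*u1^2*u2 * Dir (0,1) f11 x
      + 2*u2^3 * Dir (0,1) f22 x = 0 := by
    intro x
    have e := E1 x
    rw [dir_shapeA (u1^2) (2*u1*u2) (u2^2) h11 h12 h22 (-u1, u2) x,
        dir_shapeB (u1^2) (2*u1*u2) (u2^2) h11 h12 h22 (u1, u2) x,
        dir_expand (-u1) u2 f11 x, dir_expand (-u1) u2 f12 x, dir_expand (-u1) u2 f22 x,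
        dir_expand u1 u2 f11 x, dir_expand u1 u2 f12 x, dir_expand u1 u2 f22 x] at e
    linear_combination e
  have E2' : ∀ x : ℝ × ℝ, 4*u1^2*u2 * Dir (1,0) f12 x + 2*u2^3 * Dir (0,1) f11 x
      + 2*u1^2*u2 * Dir (0,1) f22 x = 0 := by
    intro x
    have e := E2 x
    rw [dir_shapeB (u2^2) (2*u1*u2) (u1^2) h11 h12 h22 (-u1, u2) x,
        dir_shapeA (u2^2) (2*u1*u2) (u1^2) h11 h12 h22 (u1, u2) x,
        dir_expand (-u1) u2 f11 x, dir_expand (-u1) u2 f12 x, dir_expand (-u1) u2 f22 x,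
        dir_expand u1 u2 f11 x, dir_expand u1 u2 f12 x, dir_expand u1 u2 f22 x] at e
    linear_combination e
  have E3' : ∀ x : ℝ × ℝ, 2*u1^2*u2 * Dir (1,0) f11 x - 2*u1^2*u2 * Dir (1,0) f22 x
      + 2*u2*(u1^2-u2^2) * Dir (0,1) f12 x = 0 := by
    intro x
    have e := E3 x
    rw [dir_shapeA (-(u1*u2)) (u1^2-u2^2) (u1*u2) h11 h12 h22 (-u1, u2) x,
        dir_shapeC (u1*u2) (u1^2-u2^2) (u1*u2) h11 h12 h22 (u1, u2) x,
        dir_expand (-u1) u2 f11 x, dir_expand (-u1) u2 f12 x, dir_expand (-u1) u2 f22 x,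
        dir_expand u1 u2 f11 x, dir_expand u1 u2 f12 x, dir_expand u1 u2 f22 x] at e
    linear_combination e
  have hu2ne : u2 ≠ 0 := ne_of_gt hu2
  -- trace is zero
  have sigma0 : ∀ y : ℝ × ℝ, f22 y = -f11 y := by
    have key2 : ∀ x : ℝ × ℝ, Dir (0,1) (fun y => f11 y + f22 y) x = 0 := by
      intro x
      rw [dir_add h11 h22]
      have h' : u2 * (Dir (0,1) f11 x + Dir (0,1) f22 x) = 0 := by
        linear_combination (1/2) * E1' x + (1/2) * E2'  x
          - (u2 * (Dir (0,1) f11 x + Dir (0,1) f22 x)) * hu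
      exact (mul_eq_zero.mp h').resolve_left hu2ne
    have := zero_of_dir_e (h11.add h22) (fun y hy => by rw [s11 y hy, s22 y hy]; ring)
      ((0:ℝ),(1:ℝ)) (by norm_num) key2
    intro y
    have hy := this y
    linarith
  have hf22 : f22 = fun y => -f11 y := funext sigma0
  have hc1 : ∀ x : ℝ × ℝ, Dir ((1:ℝ),(0:ℝ)) f22 x = -Dir ((1:ℝ),(0:ℝ)) f11 x := by
    intro x; rw [hf22, dir_neg]
  have hc2 : ∀ x : ℝ × ℝ, Dir ((0:ℝ),(1:ℝ)) f22 x = -Dir ((0:ℝ),(1:ℝ)) f11 x := by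
    intro x; rw [hf22, dir_neg]
  have hE4 : ∀ x : ℝ × ℝ, 2*u1^2 * Dir (1,0) f12 x = (u1^2 - u2^2) * Dir (0,1) f11 x := by
    intro x
    have h' : u2 * (2*u1^2 * Dir (1,0) f12 x - (u1^2 - u2^2) * Dir (0,1) f11 x) = 0 := by
      linear_combination (-(1:ℝ)/4) * E1' x + (1/4) * E2' x
        + (-(u2*(u1^2-u2^2))/2) * hc2 x
    have := (mul_eq_zero.mp h').resolve_left hu2ne
    linarith
  have hE5 : ∀ x : ℝ × ℝ, 2*u1^2 * Dir (1,0) f11 x = -((u1^2 - u2^2) * Dir (0,1) f12 x) := by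
    intro x
    have h' : u2 * (2*u1^2 * Dir (1,0) f11 x + (u1^2 - u2^2) * Dir (0,1) f12 x) = 0 := by
      linear_combination (1/2) * E3' x + (u1^2*u2) * hc1 x
    have := (mul_eq_zero.mp h').resolve_left hu2ne
    linarith
  have ha2 : (0:ℝ) < 2*u1^2 := by positivity
  have hmain : ∀ x : ℝ × ℝ, f11 x = 0 ∧ f12 x = 0 := by
    by_cases hbz : u1^2 - u2^2 = 0
    · have hb1 : ∀ x : ℝ × ℝ, Dir ((1:ℝ),(0:ℝ)) f12 x = 0 := by
        intro x
        have := hE4 x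
        rw [hbz, zero_mul] at this
        exact (mul_eq_zero.mp this).resolve_left (ne_of_gt ha2)
      have ha1 : ∀ x : ℝ × ℝ, Dir ((1:ℝ),(0:ℝ)) f11 x = 0 := by
        intro x
        have := hE5 x
        rw [hbz, zero_mul, neg_zero] at this
        exact (mul_eq_zero.mp this).resolve_left (ne_of_gt ha2)
      intro x
      exact ⟨zero_of_dir_e h11 s11 ((1:ℝ),(0:ℝ)) (by norm_num) ha1 x,
        zero_of_dir_e h12 s12 ((1:ℝ),(0:ℝ)) (by norm_num) hb1 x⟩
    · exact cr_zero ha2 hbz h11 h12 s11 s12 hE4 hE5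
  intro x
  obtain ⟨hg, hp⟩ := hmain x
  exact ⟨hg, hp, by rw [sigma0 x, hg, neg_zero]⟩
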